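/- Let Q be a 2×r integer matrix whose columns w₁,…,w_r span ℚ² and lie in a pointed cone, and suppose every pair of columns spans an orbit cone (toric case). Then for any two distinct maximal chambers λ′ ≤ λ′′ (2-dimensional cones spanned by consecutive columns) and any chamber λ_A, one of the following holds: there exist columns w_i, w_j with cone(w_i,w_j) ⊇ λ_A ∪ λ′ but cone(w_i,w_j) ⊉ λ_A ∪ λ′′, or there exist columns with cone(w_i,w_j) ⊇ λ_A ∪ λ′′ but ⊉ λ_A ∪ λ′. -/
import Mathlib


/-- The cross product in `ℚ²`. -/
def cross (x y : ℚ × ℚ) : ℚ := x.1 * y.2 - x.2 * y.1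

/-- The convex cone spanned by two vectors in `ℚ²`. -/
def cone2 (u v : ℚ × ℚ) : Set (ℚ × ℚ) :=
  {x | ∃ a b : ℚ, 0 ≤ a ∧ 0 ≤ b ∧ x = a • u + b • v}

lemma crossq_self (x : ℚ × ℚ) : cross x x = 0 := by simp only [cross]; ring

lemma crossq_swap (x y : ℚ × ℚ) : cross x y = - cross y x := by simp only [cross]; ring

lemma cross_smul_left (t : ℚ) (x y : ℚ × ℚ) : cross (t • x) y = t * cross x y := by
  simp only [cross, Prod.smul_fst, Prod.smul_snd, smul_eq_mul]; ring

lemma cross_smul_right (t : ℚ) (x y : ℚ × ℚ) : cross x (t • y) = t * cross x y := by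
  simp only [cross, Prod.smul_fst, Prod.smul_snd, smul_eq_mul]; ring

lemma cross_comb_right (p u v : ℚ × ℚ) (a b : ℚ) :
    cross p (a • u + b • v) = a * cross p u + b * cross p v := by
  simp only [cross, Prod.fst_add, Prod.snd_add, Prod.smul_fst, Prod.smul_snd, smul_eq_mul]; ring

lemma cross_comb_left (p u v : ℚ × ℚ) (a b : ℚ) :
    cross (a • u + b • v) p = a * cross u p + b * cross v p := by
  simp only [cross, Prod.fst_add, Prod.snd_add, Prod.smul_fst, Prod.smul_snd, smul_eq_mul]; ring

lemma mem_cone2_left (u v : ℚ × ℚ) : u ∈ cone2 u v :=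
  ⟨1, 0, zero_le_one, le_refl 0, by simp⟩

lemma mem_cone2_right (u v : ℚ × ℚ) : v ∈ cone2 u v :=
  ⟨0, 1, le_refl 0, zero_le_one, by simp⟩

lemma mem_cone2 {u v x : ℚ × ℚ} (huv : 0 < cross u v) :
    x ∈ cone2 u v ↔ 0 ≤ cross u x ∧ 0 ≤ cross x v := by
  constructor
  · rintro ⟨a, b, ha, hb, rfl⟩
    rw [cross_comb_right, cross_comb_left, crossq_self, crossq_self]
    constructor <;> nlinarith
  · rintro ⟨hh1, hh2⟩
    refine ⟨cross x v / cross u v, cross u x / cross u v,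
      div_nonneg hh2 huv.le, div_nonneg hh1 huv.le, ?_⟩
    have hD : cross u v ≠ 0 := huv.ne'
    rw [Prod.ext_iff]
    constructor <;>
    · simp only [Prod.fst_add, Prod.snd_add, Prod.smul_fst, Prod.smul_snd, smul_eq_mul]
      field_simp
      simp only [cross] at hD ⊢
      ring

lemma cone2_subset {u v p q : ℚ × ℚ} (hpq : 0 < cross p q)
    (h1 : 0 ≤ cross p u) (h2 : 0 ≤ cross u q)
    (h3 : 0 ≤ cross p v) (h4 : 0 ≤ cross v q) : cone2 u v ⊆ cone2 p q := by
  rintro x ⟨a, b, ha, hb, rfl⟩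
  rw [mem_cone2 hpq, cross_comb_right, cross_comb_left]
  constructor <;> nlinarith

lemma pos_dep {C : Set (ℚ × ℚ)}
    (hsmul : ∀ x ∈ C, ∀ q : ℚ, 0 ≤ q → q • x ∈ C)
    (hpointed : ∀ x ∈ C, -x ∈ C → x = 0)
    {u v : ℚ × ℚ} (hu : u ∈ C) (hv : v ∈ C) (hu0 : u ≠ 0) (hv0 : v ≠ 0)
    (h : cross u v = 0) : ∃ t : ℚ, 0 < t ∧ v = t • u := by
  have hdep : ∃ t : ℚ, v = t • u := by
    rcases eq_or_ne u.1 0 with h1 | h1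
    · have h2 : u.2 ≠ 0 := by
        intro h2; exact hu0 (Prod.ext h1 h2)
      refine ⟨v.2 / u.2, ?_⟩
      have hv1 : v.1 = 0 := by
        simp only [cross, h1, zero_mul, zero_sub, neg_eq_zero] at h
        rcases mul_eq_zero.mp h with h | h
        · exact absurd h h2
        · exact h
      rw [Prod.ext_iff]
      constructor <;> simp only [Prod.smul_fst, Prod.smul_snd, smul_eq_mul] <;>
        field_simp <;> simp [hv1, h1]
    · refine ⟨v.1 / u.1, ?_⟩
      rw [Prod.ext_iff]
      constructor <;> simp only [Prod.smul_fst, Prod.smul_snd, smul_eq_mul]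
      · field_simp
      · simp only [cross] at h
        field_simp
        nlinarith
  obtain ⟨t, ht⟩ := hdep
  refine ⟨t, ?_, ht⟩
  by_contra hle
  push_neg at hle
  have hnv : -v ∈ C := by
    have : (-t) • u ∈ C := hsmul u hu (-t) (by linarith)
    rwa [ht, ← neg_smul]
  exact hv0 (hpointed v hv hnv)

lemma chain {C : Set (ℚ × ℚ)}
    (hsmul : ∀ x ∈ C, ∀ q : ℚ, 0 ≤ q → q • x ∈ C)
    (hadd : ∀ x ∈ C, ∀ y ∈ C, x + y ∈ C)
    (hpointed : ∀ x ∈ C, -x ∈ C → x = 0)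
    {a b c : ℚ × ℚ} (ha : a ∈ C) (hb : b ∈ C) (hc : c ∈ C)
    (ha0 : a ≠ 0) (hb0 : b ≠ 0) (hc0 : c ≠ 0)
    (hab : 0 ≤ cross a b) (hbc : 0 ≤ cross b c)
    (hs : 0 < cross a b ∨ 0 < cross b c) : 0 < cross a c := by
  by_cases hab0 : cross a b = 0
  · have hbc' : 0 < cross b c := by
      rcases hs with h | h
      · exact absurd h (by rw [hab0]; exact lt_irrefl 0)
      · exact h
    obtain ⟨t, ht, hbe⟩ := pos_dep hsmul hpointed ha hb ha0 hb0 hab0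
    rw [hbe, cross_smul_left] at hbc'
    rcases mul_pos_iff.mp hbc' with ⟨_, hx⟩ | ⟨h', _⟩
    · exact hx
    · linarith
  by_cases hbc0 : cross b c = 0
  · have hab' : 0 < cross a b := lt_of_le_of_ne hab (Ne.symm hab0)
    obtain ⟨t, ht, hce⟩ := pos_dep hsmul hpointed hb hc hb0 hc0 hbc0
    rw [hce, cross_smul_right]
    positivity
  have h1 : 0 < cross a b := lt_of_le_of_ne hab (Ne.symm hab0)
  have h2 : 0 < cross b c := lt_of_le_of_ne hbc (Ne.symm hbc0)
  have key : cross b c • a + cross a b • c = cross a c • b := by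
    rw [Prod.ext_iff]
    constructor <;>
    · simp only [cross, Prod.fst_add, Prod.snd_add, Prod.smul_fst, Prod.smul_snd, smul_eq_mul]
      ring
  have hx : cross a c • b ∈ C := by
    rw [← key]; exact hadd _ (hsmul a ha _ h2.le) _ (hsmul c hc _ h1.le)
  by_contra hle
  push_neg at hle
  have hnx : -(cross a c • b) ∈ C := by
    have : (-(cross a c)) • b ∈ C := hsmul b hb _ (by linarith)
    rwa [neg_smul] at this
  have hz : cross a c = 0 := by
    have := hpointed _ hx hnx
    rcases smul_eq_zero.mp this with h | h
    · exact h
    · exact absurd h hb0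
  rw [hz, zero_smul] at key
  have h0 : cross b c • a = -(cross a b • c) := by
    have := eq_neg_of_add_eq_zero_left key
    exact this
  have hna : -a = (cross a b / cross b c) • c := by
    calc -a = -((cross b c)⁻¹ • (cross b c • a)) := by
            rw [smul_smul, inv_mul_cancel₀ h2.ne', one_smul]
    _ = (cross b c)⁻¹ • (cross a b • c) := by rw [h0, smul_neg, neg_neg]
    _ = (cross a b / cross b c) • c := by rw [smul_smul, inv_mul_eq_div]
  have hnaC : -a ∈ C := by
    rw [hna]; exact hsmul c hc _ (div_nonneg h1.le h2.le)
  exact ha0 (hpointed a ha hnaC)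

/-- Toric case in Picard rank two: the columns `w₁,…,w_r` span `ℚ²` and lie in
a pointed cone; every pair of columns spans an orbit cone.  Maximal chambers
are two-dimensional cones spanned by order-consecutive columns.  For two
distinct maximal chambers `λ′ = cone(w i₁, w i₂) ≤ λ″ = cone(w i₃, w i₄)` and
any maximal chamber `λ_A = cone(w i₅, w i₆)`, there exist two columns spanning
a cone containing `λ_A ∪ λ′` but not `λ_A ∪ λ″`, or two columns spanning a
cone containing `λ_A ∪ λ″` but not `λ_A ∪ λ′`. -/
theorem stmt_17 (r : ℕ) (w : Fin r → ℚ × ℚ)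
    (C : Set (ℚ × ℚ))
    (hsmul : ∀ x ∈ C, ∀ q : ℚ, 0 ≤ q → q • x ∈ C)
    (hadd : ∀ x ∈ C, ∀ y ∈ C, x + y ∈ C)
    (hpointed : ∀ x ∈ C, -x ∈ C → x = 0)
    (hwC : ∀ i, w i ∈ C) (hwne : ∀ i, w i ≠ 0)
    (hspan : Submodule.span ℚ (Set.range w) = ⊤)
    (i₁ i₂ i₃ i₄ i₅ i₆ : Fin r)
    -- the three chambers are two-dimensional (positively oriented pairs):
    (h₁ : 0 < cross (w i₁) (w i₂)) (h₂ : 0 < cross (w i₃) (w i₄))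
    (h₃ : 0 < cross (w i₅) (w i₆))
    -- the spanning pairs are order-consecutive: no column lies strictly inside:
    (hc₁ : ∀ k, ¬(0 < cross (w i₁) (w k) ∧ 0 < cross (w k) (w i₂)))
    (hc₂ : ∀ k, ¬(0 < cross (w i₃) (w k) ∧ 0 < cross (w k) (w i₄)))
    (hc₃ : ∀ k, ¬(0 < cross (w i₅) (w k) ∧ 0 < cross (w k) (w i₆)))
    -- `λ′ ≤ λ″` and the two chambers are distinct:
    (hord : ∀ x ∈ cone2 (w i₁) (w i₂), ∀ y ∈ cone2 (w i₃) (w i₄), 0 ≤ cross x y)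
    (hne : cone2 (w i₁) (w i₂) ≠ cone2 (w i₃) (w i₄)) :
    (∃ p q, cone2 (w i₅) (w i₆) ∪ cone2 (w i₁) (w i₂) ⊆ cone2 (w p) (w q) ∧
        ¬(cone2 (w i₅) (w i₆) ∪ cone2 (w i₃) (w i₄) ⊆ cone2 (w p) (w q))) ∨
    (∃ p q, cone2 (w i₅) (w i₆) ∪ cone2 (w i₃) (w i₄) ⊆ cone2 (w p) (w q) ∧
        ¬(cone2 (w i₅) (w i₆) ∪ cone2 (w i₁) (w i₂) ⊆ cone2 (w p) (w q))) := by
  have CH : ∀ a b c : Fin r, 0 ≤ cross (w a) (w b) → 0 ≤ cross (w b) (w c) →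
      (0 < cross (w a) (w b) ∨ 0 < cross (w b) (w c)) → 0 < cross (w a) (w c) :=
    fun a b c hab hbc hs =>
      chain hsmul hadd hpointed (hwC a) (hwC b) (hwC c) (hwne a) (hwne b) (hwne c) hab hbc hs
  have c23 : 0 ≤ cross (w i₂) (w i₃) := hord _ (mem_cone2_right _ _) _ (mem_cone2_left _ _)
  have c13 : 0 < cross (w i₁) (w i₃) := CH i₁ i₂ i₃ h₁.le c23 (Or.inl h₁)
  have c24 : 0 < cross (w i₂) (w i₄) := CH i₂ i₃ i₄ c23 h₂.le (Or.inr h₂)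
  rcases le_or_gt 0 (cross (w i₆) (w i₁)) with hA | hA
  · -- Case A : λ_A ≤ λ′
    have c51 : 0 < cross (w i₅) (w i₁) := CH i₅ i₆ i₁ h₃.le hA (Or.inl h₃)
    have c52 : 0 < cross (w i₅) (w i₂) := CH i₅ i₁ i₂ c51.le h₁.le (Or.inl c51)
    have c62 : 0 < cross (w i₆) (w i₂) := CH i₆ i₁ i₂ hA h₁.le (Or.inr h₁)
    left
    refine ⟨i₅, i₂, Set.union_subset ?_ ?_, ?_⟩
    · exact cone2_subset c52 (le_of_eq (crossq_self _).symm) c52.le h₃.le c62.le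
    · exact cone2_subset c52 c51.le h₁.le c52.le (le_of_eq (crossq_self _).symm)
    · intro hsub
      have h4m := hsub (Set.mem_union_right _ (mem_cone2_right (w i₃) (w i₄)))
      have := ((mem_cone2 c52).mp h4m).2
      rw [crossq_swap] at this
      linarith
  · have c16 : 0 < cross (w i₁) (w i₆) := by rw [crossq_swap] at hA; linarith
    rcases le_or_gt 0 (cross (w i₄) (w i₅)) with hB | hB
    · -- Case B : λ″ ≤ λ_A
      have c35 : 0 < cross (w i₃) (w i₅) := CH i₃ i₄ i₅ h₂.le hB (Or.inl h₂)
      have c36 : 0 < cross (w i₃) (w i₆) := CH i₃ i₅ i₆ c35.le h₃.le (Or.inl c35)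
      have c46 : 0 < cross (w i₄) (w i₆) := CH i₄ i₅ i₆ hB h₃.le (Or.inr h₃)
      right
      refine ⟨i₃, i₆, Set.union_subset ?_ ?_, ?_⟩
      · exact cone2_subset c36 c35.le h₃.le c36.le (le_of_eq (crossq_self _).symm)
      · exact cone2_subset c36 (le_of_eq (crossq_self _).symm) c36.le h₂.le c46.le
      · intro hsub
        have h1m := hsub (Set.mem_union_right _ (mem_cone2_left (w i₁) (w i₂)))
        have := ((mem_cone2 c36).mp h1m).1
        rw [crossq_swap] at this
        linarith
    · -- Case C : λ′ ≤ λ_A ≤ λ″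
      have c54 : 0 < cross (w i₅) (w i₄) := by rw [crossq_swap] at hB; linarith
      have c15 : 0 ≤ cross (w i₁) (w i₅) := by
        by_contra hlt
        push_neg at hlt
        have h51 : 0 < cross (w i₅) (w i₁) := by rw [crossq_swap]; linarith
        exact hc₃ i₁ ⟨h51, c16⟩
      have c26 : 0 ≤ cross (w i₂) (w i₆) := by
        by_contra hlt
        push_neg at hlt
        have h62 : 0 < cross (w i₆) (w i₂) := by rw [crossq_swap]; linarith
        exact hc₁ i₆ ⟨c16, h62⟩
      have c53 : 0 ≤ cross (w i₅) (w i₃) := by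
        by_contra hlt
        push_neg at hlt
        have h35 : 0 < cross (w i₃) (w i₅) := by rw [crossq_swap]; linarith
        exact hc₂ i₅ ⟨h35, c54⟩
      have c64 : 0 ≤ cross (w i₆) (w i₄) := by
        by_contra hlt
        push_neg at hlt
        have h46 : 0 < cross (w i₄) (w i₆) := by rw [crossq_swap]; linarith
        exact hc₃ i₄ ⟨c54, h46⟩
      rcases lt_or_eq_of_le c64 with hC1 | hC2
      · -- C1 : w i₄ strictly after w i₆
        left
        refine ⟨i₁, i₆, Set.union_subset ?_ ?_, ?_⟩
        · exact cone2_subset c16 c15 h₃.le c16.le (le_of_eq (crossq_self _).symm)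
        · exact cone2_subset c16 (le_of_eq (crossq_self _).symm) c16.le h₁.le c26
        · intro hsub
          have h4m := hsub (Set.mem_union_right _ (mem_cone2_right (w i₃) (w i₄)))
          have := ((mem_cone2 c16).mp h4m).2
          rw [crossq_swap] at this
          linarith
      · -- C2 : w i₄ parallel to w i₆
        rcases lt_or_eq_of_le c15 with hD1 | hD2
        · -- C2a : w i₅ strictly after w i₁
          right
          refine ⟨i₅, i₄, Set.union_subset ?_ ?_, ?_⟩
          · exact cone2_subset c54 (le_of_eq (crossq_self _).symm) c54.le h₃.le (le_of_eq hC2)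
          · exact cone2_subset c54 c53 h₂.le c54.le (le_of_eq (crossq_self _).symm)
          · intro hsub
            have h1m := hsub (Set.mem_union_right _ (mem_cone2_left (w i₁) (w i₂)))
            have := ((mem_cone2 c54).mp h1m).1
            rw [crossq_swap] at this
            linarith
        · -- C2b : w i₅ parallel to w i₁ : impossible (w i₂ strictly inside λ_A)
          exfalso
          obtain ⟨t, ht, h5e⟩ :=
            pos_dep hsmul hpointed (hwC i₁) (hwC i₅) (hwne i₁) (hwne i₅) hD2.symm
          obtain ⟨s, hs, h4e⟩ :=
            pos_dep hsmul hpointed (hwC i₆) (hwC i₄) (hwne i₆) (hwne i₄) hC2.symm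
          have h52 : 0 < cross (w i₅) (w i₂) := by
            rw [h5e, cross_smul_left]
            exact mul_pos ht h₁
          have h26 : 0 < cross (w i₂) (w i₆) := by
            have h24 : 0 < cross (w i₂) (w i₄) := c24
            rw [h4e, cross_smul_right] at h24
            rcases mul_pos_iff.mp h24 with ⟨_, hx⟩ | ⟨h', _⟩
            · exact hx
            · linarith
          exact hc₃ i₂ ⟨h52, h26⟩
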